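/- Let A be an n×n symmetric positive definite matrix, C an m×m symmetric positive definite matrix, and B an m×n matrix. The generalized eigenvalue problem [[A, Bᵀ],[B, C]](x,y)ᵀ = λ[[0, -Bᵀ],[0,0]](x,y)ᵀ has: (i) the kernel of the right-hand side matrix has dimension n + dim ker(Bᵀ); (ii) the number of finite eigenvalues, counted with multiplicity via the Schur complement problem Ax = (λ+1)BᵀC⁻¹Bx, equals rank(Bᵀ) = rank(B). -/

import Mathlib

open Matrix
open scoped MatrixOrder


lemma ker_rank_aux {k : ℕ} (X : Matrix (Fin k) (Fin k) ℝ) :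
    Module.finrank ℝ (LinearMap.ker X.mulVecLin) = k - X.rank := by
  have h := LinearMap.finrank_range_add_finrank_ker X.mulVecLin
  rw [Module.finrank_fin_fun] at h
  have : X.rank = Module.finrank ℝ (LinearMap.range X.mulVecLin) := rfl
  omega

lemma block_mem_iff {n m : ℕ} (B : Matrix (Fin m) (Fin n) ℝ) (v : Fin n ⊕ Fin m → ℝ) :
    (fromBlocks (0 : Matrix (Fin n) (Fin n) ℝ) (-Bᵀ)
        (0 : Matrix (Fin m) (Fin n) ℝ) (0 : Matrix (Fin m) (Fin m) ℝ)).mulVecLin v = 0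
      ↔ Bᵀ *ᵥ (v ∘ Sum.inr) = 0 := by
  have hv : v = Sum.elim (v ∘ Sum.inl) (v ∘ Sum.inr) := by funext i; cases i <;> rfl
  rw [mulVecLin_apply]
  conv_lhs => rw [hv]
  rw [fromBlocks_mulVec]
  simp only [zero_mulVec, zero_add, add_zero, neg_mulVec, Sum.elim_comp_inl, Sum.elim_comp_inr]
  constructor
  · intro h
    have := congrFun h
    have h1 : ∀ i, -(Bᵀ *ᵥ (v ∘ Sum.inr)) i = 0 := fun i => this (Sum.inl i)
    funext i
    have := h1 i
    simp only [Pi.neg_apply, neg_eq_zero] at this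
    exact this
  · intro h
    rw [h, neg_zero]
    funext i
    cases i <;> rfl

noncomputable def kerBlockEquiv {n m : ℕ} (B : Matrix (Fin m) (Fin n) ℝ) :
    (LinearMap.ker ((fromBlocks (0 : Matrix (Fin n) (Fin n) ℝ) (-Bᵀ)
        (0 : Matrix (Fin m) (Fin n) ℝ) (0 : Matrix (Fin m) (Fin m) ℝ)).mulVecLin))
      ≃ₗ[ℝ] (Fin n → ℝ) × (LinearMap.ker Bᵀ.mulVecLin) where
  toFun v := (v.1 ∘ Sum.inl, ⟨v.1 ∘ Sum.inr, by
    have := v.2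
    rw [LinearMap.mem_ker, block_mem_iff] at this
    exact this⟩)
  map_add' u v := rfl
  map_smul' c v := rfl
  invFun p := ⟨Sum.elim p.1 p.2.1, by
    rw [LinearMap.mem_ker, block_mem_iff]
    exact p.2.2⟩
  left_inv v := by
    apply Subtype.ext
    funext i
    cases i <;> rfl
  right_inv p := by
    refine Prod.ext rfl (Subtype.ext ?_)
    rfl

/-- Eigenstructure of the discrete FOSLS pencil `[[A,Bᵀ],[B,C]] = λ[[0,-Bᵀ],[0,0]]`:
(i) the kernel of the right-hand side block matrix has dimension `n + dim ker Bᵀ`;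
(ii) the finite eigenvalues, counted with multiplicity via the Schur complement
problem `Ax = (λ+1)BᵀC⁻¹Bx`, number exactly `rank Bᵀ = rank B`. -/
theorem stmt8 {n m : ℕ} (A : Matrix (Fin n) (Fin n) ℝ) (B : Matrix (Fin m) (Fin n) ℝ)
    (C : Matrix (Fin m) (Fin m) ℝ) (hA : A.PosDef) (hC : C.PosDef) :
    (Module.finrank ℝ
        (LinearMap.ker ((fromBlocks (0 : Matrix (Fin n) (Fin n) ℝ) (-Bᵀ)
          (0 : Matrix (Fin m) (Fin n) ℝ) (0 : Matrix (Fin m) (Fin m) ℝ)).mulVecLin))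
      = n + Module.finrank ℝ (LinearMap.ker (Bᵀ.mulVecLin))) ∧
    (∃ Λ : Finset ℝ,
      (∀ lam : ℝ,
        (∃ x : Fin n → ℝ, x ≠ 0 ∧ A *ᵥ x = (lam + 1) • ((Bᵀ * C⁻¹ * B) *ᵥ x)) ↔ lam ∈ Λ) ∧
      (∑ lam ∈ Λ, Module.finrank ℝ
          (LinearMap.ker ((A - (lam + 1) • (Bᵀ * C⁻¹ * B)).mulVecLin))) = Bᵀ.rank ∧
      Bᵀ.rank = B.rank) := by
  constructor
  · exact ((kerBlockEquiv B).finrank_eq).trans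
      (by rw [Module.finrank_prod, Module.finrank_fin_fun])
  · set S : Matrix (Fin n) (Fin n) ℝ := Bᵀ * C⁻¹ * B with hSdef
    have hS : S.PosSemidef := by
      have := (hC.inv.posSemidef).conjTranspose_mul_mul_same B
      rwa [conjTranspose_eq_transpose_of_trivial] at this
    set L : Matrix (Fin n) (Fin n) ℝ := CFC.sqrt A with hLdef
    have hLL : L * L = A := CFC.sqrt_mul_sqrt_self A hA.posSemidef.nonneg
    have hLherm : L.IsHermitian := (Matrix.nonneg_iff_posSemidef.mp (CFC.sqrt_nonneg A)).1
    have hLdet : IsUnit L.det := by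
      have hdA : A.det ≠ 0 := hA.det_pos.ne'
      rw [← hLL, det_mul] at hdA
      exact isUnit_iff_ne_zero.2 (left_ne_zero_of_mul hdA)
    have hLinvdet : IsUnit L⁻¹.det := L.isUnit_nonsing_inv_det hLdet
    set M : Matrix (Fin n) (Fin n) ℝ := L⁻¹ * S * L⁻¹ with hMdef
    have hMps : M.PosSemidef := by
      have := hS.conjTranspose_mul_mul_same L⁻¹
      rwa [hLherm.inv.eq] at this
    -- key factorization
    have hfac : ∀ μ : ℝ, A - μ • S = L * (1 - μ • M) * L := by
      intro μ
      have h1 : L * M * L = S := by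
        rw [hMdef]
        simp only [← Matrix.mul_assoc]
        rw [mul_nonsing_inv _ hLdet, Matrix.one_mul, Matrix.mul_assoc,
          nonsing_inv_mul _ hLdet, Matrix.mul_one]
      rw [Matrix.mul_sub, Matrix.sub_mul, Matrix.mul_one, hLL,
        mul_smul_comm, smul_mul_assoc, h1]
    -- spectral data
    set d : Fin n → ℝ := hMps.1.eigenvalues with hd
    set U : Matrix (Fin n) (Fin n) ℝ := (hMps.1.eigenvectorUnitary : Matrix (Fin n) (Fin n) ℝ) with hU
    have hUst : U * star U = 1 := (Matrix.mem_unitaryGroup_iff).mp hMps.1.eigenvectorUnitary.2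
    have hstU : star U * U = 1 := (Matrix.mem_unitaryGroup_iff').mp hMps.1.eigenvectorUnitary.2
    have hUdet : IsUnit U.det :=
      (isUnit_iff_isUnit_det U).mp ⟨⟨U, star U, hUst, hstU⟩, rfl⟩
    have hUstdet : IsUnit (star U).det :=
      (isUnit_iff_isUnit_det _).mp ⟨⟨star U, U, hstU, hUst⟩, rfl⟩
    have hsp : M = U * diagonal d * star U := by
      have := hMps.1.spectral_theorem
      simpa using this
    have hMdiag : ∀ μ : ℝ, 1 - μ • M = U * diagonal (fun i => 1 - μ * d i) * star U := by
      intro μ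
      have hdd : diagonal (fun i => 1 - μ * d i) = 1 - μ • diagonal d := by
        rw [← diagonal_one, ← diagonal_smul, ← diagonal_sub]
        rfl
      rw [hdd, Matrix.mul_sub, Matrix.sub_mul, Matrix.mul_one, hUst,
        mul_smul_comm, smul_mul_assoc, ← hsp]
    have hrank : ∀ μ : ℝ, (A - μ • S).rank = (diagonal (fun i => 1 - μ * d i)).rank := by
      intro μ
      rw [hfac μ, rank_mul_eq_left_of_isUnit_det _ _ hLdet,
        rank_mul_eq_right_of_isUnit_det _ _ hLdet, hMdiag μ,
        rank_mul_eq_left_of_isUnit_det _ _ hUstdet,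
        rank_mul_eq_right_of_isUnit_det _ _ hUdet]
    have hker : ∀ μ : ℝ, Module.finrank ℝ (LinearMap.ker ((A - μ • S).mulVecLin))
        = (Finset.univ.filter (fun i => μ * d i = 1)).card := by
      intro μ
      rw [ker_rank_aux, hrank μ, rank_diagonal]
      have h1 : Fintype.card {i // 1 - μ * d i ≠ 0}
          = (Finset.univ.filter (fun i => ¬ (μ * d i = 1))).card := by
        rw [Fintype.card_subtype]
        congr 1
        apply Finset.filter_congr
        intro i _
        rw [sub_ne_zero]
        constructor
        · exact fun h h' => h h'.symm
        · exact fun h h' => h h'.symm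
      have h2 := Finset.card_filter_add_card_filter_not
        (s := (Finset.univ : Finset (Fin n))) (p := fun i => μ * d i = 1)
      rw [Finset.card_univ, Fintype.card_fin] at h2
      omega
    -- pointwise characterization
    have hptw : ∀ (lam : ℝ) (i : Fin n),
        (lam + 1) * d i = 1 ↔ (d i ≠ 0 ∧ (d i)⁻¹ - 1 = lam) := by
      intro lam i
      constructor
      · intro h
        have h0 : d i ≠ 0 := by
          intro hz; rw [hz, mul_zero] at h; exact one_ne_zero h.symm
        have := eq_inv_of_mul_eq_one_left h
        exact ⟨h0, by rw [← this]; ring⟩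
      · rintro ⟨h0, he⟩
        have : lam + 1 = (d i)⁻¹ := by linarith
        rw [this, inv_mul_cancel₀ h0]
    refine ⟨Finset.image (fun i => (d i)⁻¹ - 1)
      (Finset.univ.filter fun i => d i ≠ 0), ?_, ?_, rank_transpose B⟩
    · intro lam
      have hmem : lam ∈ Finset.image (fun i => (d i)⁻¹ - 1)
          (Finset.univ.filter fun i => d i ≠ 0) ↔ ∃ i, d i ≠ 0 ∧ (d i)⁻¹ - 1 = lam := by
        simp [Finset.mem_image, Finset.mem_filter]
      rw [hmem]
      constructor
      · rintro ⟨x, hx0, hx⟩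
        have hxk : x ∈ LinearMap.ker ((A - (lam + 1) • S).mulVecLin) := by
          rw [LinearMap.mem_ker, mulVecLin_apply, sub_mulVec, smul_mulVec, hx, sub_self]
        have hne : Module.finrank ℝ (LinearMap.ker ((A - (lam + 1) • S).mulVecLin)) ≠ 0 := by
          intro h0
          rw [Submodule.finrank_eq_zero] at h0
          rw [h0, Submodule.mem_bot] at hxk
          exact hx0 hxk
        rw [hker (lam + 1)] at hne
        obtain ⟨i, hi⟩ := Finset.filter_nonempty_iff.mp (Finset.card_pos.mp
          (Nat.pos_of_ne_zero hne))
        exact ⟨i, (hptw lam i).mp hi.2⟩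
      · rintro ⟨i, hi⟩
        have hne : (Finset.univ.filter (fun j => (lam + 1) * d j = 1)).card ≠ 0 := by
          apply Finset.card_ne_zero_of_mem (a := i)
          exact Finset.mem_filter.mpr ⟨Finset.mem_univ i, (hptw lam i).mpr hi⟩
        rw [← hker (lam + 1)] at hne
        have := Submodule.finrank_eq_zero
          (S := LinearMap.ker ((A - (lam + 1) • S).mulVecLin)) |>.not.mp hne
        obtain ⟨x, hxk, hx0⟩ := Submodule.ne_bot_iff _ |>.mp this
        refine ⟨x, hx0, ?_⟩
        rw [LinearMap.mem_ker, mulVecLin_apply, sub_mulVec] at hxk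
        rw [smul_mulVec] at hxk
        exact sub_eq_zero.mp hxk
    · -- the sum
      have hstep : ∀ lam ∈ Finset.image (fun i => (d i)⁻¹ - 1)
          (Finset.univ.filter fun i => d i ≠ 0),
          Module.finrank ℝ (LinearMap.ker ((A - (lam + 1) • S).mulVecLin))
            = ((Finset.univ.filter fun i => d i ≠ 0).filter
                (fun i => (d i)⁻¹ - 1 = lam)).card := by
        intro lam _
        rw [hker (lam + 1)]
        congr 1
        rw [Finset.filter_filter]
        apply Finset.filter_congr
        intro i _
        rw [hptw lam i]
      rw [Finset.sum_congr rfl hstep, ← Finset.card_eq_sum_card_image]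
      -- now : (filter (d ≠ 0)).card = Bᵀ.rank
      have hcard : (Finset.univ.filter fun i => d i ≠ 0).card = M.rank := by
        rw [hMps.1.rank_eq_card_non_zero_eigs, Fintype.card_subtype]
      rw [hcard]
      have hMS : M.rank = S.rank := by
        rw [hMdef, rank_mul_eq_left_of_isUnit_det _ _ hLinvdet,
          rank_mul_eq_right_of_isUnit_det _ _ hLinvdet]
      rw [hMS, rank_transpose B]
      -- S.rank = B.rank
      set R : Matrix (Fin m) (Fin m) ℝ := CFC.sqrt C⁻¹ with hR
      have hRR : R * R = C⁻¹ := CFC.sqrt_mul_sqrt_self C⁻¹ hC.inv.posSemidef.nonneg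
      have hRt : Rᵀ = R := by
        rw [← conjTranspose_eq_transpose_of_trivial]
        exact (Matrix.nonneg_iff_posSemidef.mp (CFC.sqrt_nonneg C⁻¹)).1
      have hRdet : IsUnit R.det := by
        have hdC : (C⁻¹).det ≠ 0 := hC.inv.det_pos.ne'
        rw [← hRR, det_mul] at hdC
        exact isUnit_iff_ne_zero.2 (left_ne_zero_of_mul hdC)
      have hSfac : S = (R * B)ᵀ * (R * B) := by
        rw [transpose_mul, hRt, hSdef, ← hRR]
        simp only [Matrix.mul_assoc]
      rw [hSfac, rank_transpose_mul_self, rank_mul_eq_right_of_isUnit_det _ _ hRdet]
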